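/- Let X be an approximate subring of a ring, and define the sequence (X_n) by X_0 := X and X_{n+1} := X_n·X_n + (X_n + X_n). Then for every n, the set X_n is covered by finitely many additive translates of X (i.e. there is a finite set F_n with X_n ⊆ F_n + X). -/

import Mathlib

open Pointwise

/-- A subset of a (not necessarily unital or commutative) ring is additively symmetric
if it contains `0` and `-X = X`. -/
def AddSymmetric {R : Type*} [NonUnitalRing R] (X : Set R) : Prop :=
  (0 : R) ∈ X ∧ -X = X

/-- `X` is an approximate subring if it is additively symmetric and
`X·X ∪ (X+X) ⊆ F + X` for some finite subset `F` of the subring generated by `X`. -/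
def IsApproxSubring {R : Type*} [NonUnitalRing R] (X : Set R) : Prop :=
  AddSymmetric X ∧ ∃ F : Set R, F.Finite ∧ F ⊆ (NonUnitalSubring.closure X : Set R) ∧
    X * X ∪ (X + X) ⊆ F + X

open Pointwise

section CovAux

variable {R : Type*} [NonUnitalRing R]

/-- `A` is covered by finitely many additive translates (from the subring generated by `X`)
of `X`. -/
def CovBy' (X A : Set R) : Prop :=
  ∃ G : Set R, G.Finite ∧ G ⊆ (NonUnitalSubring.closure X : Set R) ∧ A ⊆ G + X

lemma covBy'_mono {X A B : Set R} (h : A ⊆ B) (hB : CovBy' X B) : CovBy' X A := by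
  obtain ⟨G, hGf, hGc, hGs⟩ := hB
  exact ⟨G, hGf, hGc, h.trans hGs⟩

lemma covBy'_of_finite {X S : Set R} (h0 : (0 : R) ∈ X) (hf : S.Finite)
    (hc : S ⊆ (NonUnitalSubring.closure X : Set R)) : CovBy' X S :=
  ⟨S, hf, hc, fun a ha => ⟨a, ha, 0, h0, add_zero a⟩⟩

lemma covBy'_union {X A B : Set R} (hA : CovBy' X A) (hB : CovBy' X B) : CovBy' X (A ∪ B) := by
  obtain ⟨G, hGf, hGc, hGs⟩ := hA
  obtain ⟨H, hHf, hHc, hHs⟩ := hB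
  refine ⟨G ∪ H, hGf.union hHf, Set.union_subset hGc hHc, ?_⟩
  exact Set.union_subset
    (hGs.trans (Set.add_subset_add Set.subset_union_left subset_rfl))
    (hHs.trans (Set.add_subset_add Set.subset_union_right subset_rfl))

lemma covBy'_add {X : Set R} (hXpX : CovBy' X (X + X)) {A B : Set R}
    (hA : CovBy' X A) (hB : CovBy' X B) : CovBy' X (A + B) := by
  obtain ⟨G, hGf, hGc, hGs⟩ := hA
  obtain ⟨H, hHf, hHc, hHs⟩ := hB
  obtain ⟨K, hKf, hKc, hKs⟩ := hXpX
  refine ⟨G + H + K, (hGf.add hHf).add hKf, ?_, ?_⟩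
  · rintro _ ⟨_, ⟨g, hg, h, hh, rfl⟩, k, hk, rfl⟩
    exact add_mem (add_mem (hGc hg) (hHc hh)) (hKc hk)
  · calc A + B ⊆ (G + X) + (H + X) := Set.add_subset_add hGs hHs
      _ = (G + H) + (X + X) := add_add_add_comm G X H X
      _ ⊆ (G + H) + (K + X) := Set.add_subset_add subset_rfl hKs
      _ = (G + H + K) + X := (add_assoc _ _ _).symm

lemma covBy'_singleton_mul {X : Set R} (h0 : (0 : R) ∈ X) (hsym : -X = X)
    (hXX : CovBy' X (X * X)) (hXpX : CovBy' X (X + X)) {a : R}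
    (ha : a ∈ NonUnitalSubring.closure X) :
    CovBy' X ({a} * X) ∧ CovBy' X (X * {a}) := by
  induction ha using NonUnitalSubring.closure_induction with
  | mem x hx =>
    constructor
    · exact covBy'_mono (Set.mul_subset_mul (Set.singleton_subset_iff.mpr hx) subset_rfl) hXX
    · exact covBy'_mono (Set.mul_subset_mul subset_rfl (Set.singleton_subset_iff.mpr hx)) hXX
  | zero =>
    have hcl : ({0} : Set R) ⊆ (NonUnitalSubring.closure X : Set R) := by
      simp [zero_mem]
    constructor
    · refine ⟨{0}, Set.finite_singleton 0, hcl, ?_⟩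
      rintro _ ⟨b, hb, x, hx, rfl⟩
      rw [Set.mem_singleton_iff] at hb; subst hb
      exact ⟨0, rfl, 0, h0, by simp⟩
    · refine ⟨{0}, Set.finite_singleton 0, hcl, ?_⟩
      rintro _ ⟨x, hx, b, hb, rfl⟩
      rw [Set.mem_singleton_iff] at hb; subst hb
      exact ⟨0, rfl, 0, h0, by simp⟩
  | add x y hx hy ihx ihy =>
    constructor
    · refine covBy'_mono (B := {x} * X + {y} * X) ?_ (covBy'_add hXpX ihx.1 ihy.1)
      rintro _ ⟨b, hb, z, hz, rfl⟩
      rw [Set.mem_singleton_iff] at hb; subst hb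
      exact ⟨x * z, ⟨x, rfl, z, hz, rfl⟩, y * z, ⟨y, rfl, z, hz, rfl⟩, (add_mul x y z).symm⟩
    · refine covBy'_mono (B := X * {x} + X * {y}) ?_ (covBy'_add hXpX ihx.2 ihy.2)
      rintro _ ⟨z, hz, b, hb, rfl⟩
      rw [Set.mem_singleton_iff] at hb; subst hb
      exact ⟨z * x, ⟨z, hz, x, rfl, rfl⟩, z * y, ⟨z, hz, y, rfl, rfl⟩, (mul_add z x y).symm⟩
  | neg x hx ihx =>
    obtain ⟨⟨G, hGf, hGc, hGs⟩, ⟨H, hHf, hHc, hHs⟩⟩ := ihx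
    have hnegc : ∀ {S : Set R}, S ⊆ (NonUnitalSubring.closure X : Set R) →
        -S ⊆ (NonUnitalSubring.closure X : Set R) := by
      intro S hS y hy
      rw [Set.mem_neg] at hy
      simpa using neg_mem (hS hy)
    constructor
    · refine ⟨-G, hGf.neg, hnegc hGc, ?_⟩
      rintro _ ⟨b, hb, z, hz, rfl⟩
      rw [Set.mem_singleton_iff] at hb; subst hb
      obtain ⟨g, hg, w, hw, hgw⟩ := hGs ⟨x, rfl, z, hz, rfl⟩
      refine ⟨-g, Set.neg_mem_neg.mpr hg, -w, ?_, by have h' : g + w = x * z := hgw; show -g + -w = -x * z; rw [neg_mul, ← h', neg_add]⟩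
      rw [← hsym, Set.mem_neg, neg_neg]; exact hw
    · refine ⟨-H, hHf.neg, hnegc hHc, ?_⟩
      rintro _ ⟨z, hz, b, hb, rfl⟩
      rw [Set.mem_singleton_iff] at hb; subst hb
      obtain ⟨g, hg, w, hw, hgw⟩ := hHs ⟨z, hz, x, rfl, rfl⟩
      refine ⟨-g, Set.neg_mem_neg.mpr hg, -w, ?_, by have h' : g + w = z * x := hgw; show -g + -w = z * -x; rw [mul_neg, ← h', neg_add]⟩
      rw [← hsym, Set.mem_neg, neg_neg]; exact hw
  | mul x y hx hy ihx ihy =>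
    constructor
    · obtain ⟨H, hHf, hHc, hHs⟩ := ihy.1
      have step : {x * y} * X ⊆ {x} * H + {x} * X := by
        rintro _ ⟨b, hb, z, hz, rfl⟩
        rw [Set.mem_singleton_iff] at hb; subst hb
        obtain ⟨h, hh, w, hw, hhw⟩ := hHs ⟨y, rfl, z, hz, rfl⟩
        exact ⟨x * h, ⟨x, rfl, h, hh, rfl⟩, x * w, ⟨x, rfl, w, hw, rfl⟩,
          by have h' : h + w = y * z := hhw; show x * h + x * w = x * y * z; rw [← mul_add, h', mul_assoc]⟩
      refine covBy'_mono step (covBy'_add hXpX ?_ ihx.1)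
      refine covBy'_of_finite h0 ((Set.finite_singleton x).mul hHf) ?_
      rintro _ ⟨b, hb, h, hh, rfl⟩
      rw [Set.mem_singleton_iff] at hb; subst hb
      exact mul_mem hx (hHc hh)
    · obtain ⟨H, hHf, hHc, hHs⟩ := ihx.2
      have step : X * {x * y} ⊆ H * {y} + X * {y} := by
        rintro _ ⟨z, hz, b, hb, rfl⟩
        rw [Set.mem_singleton_iff] at hb; subst hb
        obtain ⟨h, hh, w, hw, hhw⟩ := hHs ⟨z, hz, x, rfl, rfl⟩
        exact ⟨h * y, ⟨h, hh, y, rfl, rfl⟩, w * y, ⟨w, hw, y, rfl, rfl⟩,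
          by have h' : h + w = z * x := hhw; show h * y + w * y = z * (x * y); rw [← add_mul, h', mul_assoc]⟩
      refine covBy'_mono step (covBy'_add hXpX ?_ ihy.2)
      refine covBy'_of_finite h0 (hHf.mul (Set.finite_singleton y)) ?_
      rintro _ ⟨h, hh, b, hb, rfl⟩
      rw [Set.mem_singleton_iff] at hb; subst hb
      exact mul_mem (hHc hh) hy

lemma covBy'_finite_mul {X : Set R} (h0 : (0 : R) ∈ X) (hsym : -X = X)
    (hXX : CovBy' X (X * X)) (hXpX : CovBy' X (X + X)) {S : Set R} (hSf : S.Finite) :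
    S ⊆ (NonUnitalSubring.closure X : Set R) → CovBy' X (S * X) ∧ CovBy' X (X * S) := by
  refine Set.Finite.induction_on (motive := fun S _ => S ⊆ (NonUnitalSubring.closure X : Set R) →
    CovBy' X (S * X) ∧ CovBy' X (X * S)) S hSf ?_ ?_
  · intro _
    constructor <;>
    · refine ⟨∅, Set.finite_empty, Set.empty_subset _, ?_⟩
      simp
  · intro a s ha hs ih hsub
    have hmem : a ∈ NonUnitalSubring.closure X := hsub (Set.mem_insert a s)
    have hsc : s ⊆ (NonUnitalSubring.closure X : Set R) :=
      (Set.subset_insert a s).trans hsub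
    obtain ⟨ih1, ih2⟩ := ih hsc
    obtain ⟨ha1, ha2⟩ := covBy'_singleton_mul h0 hsym hXX hXpX hmem
    constructor
    · rw [Set.insert_eq, Set.union_mul]
      exact covBy'_union ha1 ih1
    · rw [Set.insert_eq, Set.mul_union]
      exact covBy'_union ha2 ih2

lemma covBy'_mul {X : Set R} (h0 : (0 : R) ∈ X) (hsym : -X = X)
    (hXX : CovBy' X (X * X)) (hXpX : CovBy' X (X + X)) {A B : Set R}
    (hA : CovBy' X A) (hB : CovBy' X B) : CovBy' X (A * B) := by
  obtain ⟨G, hGf, hGc, hGs⟩ := hA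
  obtain ⟨H, hHf, hHc, hHs⟩ := hB
  have h1 : A * B ⊆ (G * H + X * H) + (G * X + X * X) := by
    calc A * B ⊆ (G + X) * (H + X) := Set.mul_subset_mul hGs hHs
      _ ⊆ (G + X) * H + (G + X) * X := Set.mul_add_subset _ _ _
      _ ⊆ (G * H + X * H) + (G * X + X * X) :=
        Set.add_subset_add (Set.add_mul_subset _ _ _) (Set.add_mul_subset _ _ _)
  refine covBy'_mono h1 (covBy'_add hXpX (covBy'_add hXpX ?_ ?_) (covBy'_add hXpX ?_ hXX))
  · refine covBy'_of_finite h0 (hGf.mul hHf) ?_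
    rintro _ ⟨g, hg, h, hh, rfl⟩
    exact mul_mem (hGc hg) (hHc hh)
  · exact (covBy'_finite_mul h0 hsym hXX hXpX hHf hHc).2
  · exact (covBy'_finite_mul h0 hsym hXX hXpX hGf hGc).1

end CovAux
/-- The sequence `X_0 := X`, `X_{n+1} := X_n·X_n + (X_n + X_n)`. -/
def XSeq {R : Type*} [NonUnitalRing R] (X : Set R) : ℕ → Set R
  | 0 => X
  | n + 1 => XSeq X n * XSeq X n + (XSeq X n + XSeq X n)


/-- For an approximate subring `X`, every `X_n` is covered by finitely many
additive translates of `X`. -/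
theorem approx_subring_XSeq_covered
    {R : Type*} [NonUnitalRing R] (X : Set R) (hX : IsApproxSubring X) (n : ℕ) :
    ∃ F : Set R, F.Finite ∧ XSeq X n ⊆ F + X := by
  obtain ⟨⟨h0, hsym⟩, F, hF, hFc, hcov⟩ := hX
  obtain ⟨hmul, hadd⟩ := Set.union_subset_iff.mp hcov
  have hXX : CovBy' X (X * X) := ⟨F, hF, hFc, hmul⟩
  have hXpX : CovBy' X (X + X) := ⟨F, hF, hFc, hadd⟩
  have key : ∀ m, CovBy' X (XSeq X m) := by
    intro m
    induction m with
    | zero =>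
      refine ⟨{0}, Set.finite_singleton 0, by simp [zero_mem], ?_⟩
      intro x hx
      exact ⟨0, rfl, x, hx, zero_add x⟩
    | succ m ih =>
      exact covBy'_add hXpX (covBy'_mul h0 hsym hXX hXpX ih ih) (covBy'_add hXpX ih ih)
  obtain ⟨G, hGf, _, hGs⟩ := key n
  exact ⟨G, hGf, hGs⟩
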